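/- With the construction of the previous setting (τ obtained from v by directional integration), the discrete inf-sup condition sup_{0≠τ∈Σ_k(𝒯_h)} (div τ, v)_{L²(Ω)} / ‖τ‖_{H(div,Ω)} ≥ √(2/3) ‖v‖_{L²(Ω)} holds for every v ∈ V_k(𝒯_h). -/

import Mathlib

open intervalIntegral MvPolynomial

/-- Evaluation of a bivariate polynomial (variable `0` is `x`, variable `1` is `y`). -/
noncomputable def ev2 (p : MvPolynomial (Fin 2) ℝ) (x y : ℝ) : ℝ :=
  MvPolynomial.eval ![x, y] p

/-- Membership in `P_k \ span{y^k}`. -/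
def memPkNoYk (k : ℕ) (p : MvPolynomial (Fin 2) ℝ) : Prop :=
  p.totalDegree ≤ k ∧ MvPolynomial.coeff (Finsupp.single 1 k) p = 0

/-- Membership in `P_k \ span{x^k}`. -/
def memPkNoXk (k : ℕ) (p : MvPolynomial (Fin 2) ℝ) : Prop :=
  p.totalDegree ≤ k ∧ MvPolynomial.coeff (Finsupp.single 0 k) p = 0

/-- First component of the enriched BDFM space:
`P_k \ span{y^k} ⊕ span{x^{k+1}, x² y^{k-1}}`. -/
def memH1 (k : ℕ) (q : MvPolynomial (Fin 2) ℝ) : Prop :=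
  ∃ p : MvPolynomial (Fin 2) ℝ, ∃ a b : ℝ, memPkNoYk k p ∧
    q = p + MvPolynomial.C a * X 0 ^ (k + 1) + MvPolynomial.C b * X 0 ^ 2 * X 1 ^ (k - 1)

/-- Second component of the enriched BDFM space. -/
def memH2 (k : ℕ) (q : MvPolynomial (Fin 2) ℝ) : Prop :=
  ∃ p : MvPolynomial (Fin 2) ℝ, ∃ a b : ℝ, memPkNoXk k p ∧
    q = p + MvPolynomial.C a * X 1 ^ (k + 1) + MvPolynomial.C b * X 1 ^ 2 * X 0 ^ (k - 1)

/-- The serendipity space of order `k`: `S_k = P_k + span{x^k y, x y^k}`. -/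
def memS (k : ℕ) (q : MvPolynomial (Fin 2) ℝ) : Prop :=
  ∃ p : MvPolynomial (Fin 2) ℝ, ∃ a b : ℝ, p.totalDegree ≤ k ∧
    q = p + MvPolynomial.C a * X 0 ^ k * X 1 + MvPolynomial.C b * X 0 * X 1 ^ k

/-- Local displacement space
`V_k(K) = (P_{k-1})² ⊕ span{(x^k,0),(0,y^k),(xy^{k-1},0),(0,x^{k-1}y)}`. -/
def memVk (k : ℕ) (q1 q2 : MvPolynomial (Fin 2) ℝ) : Prop :=
  ∃ p1 p2 : MvPolynomial (Fin 2) ℝ, ∃ a b c d : ℝ,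
    p1.totalDegree ≤ k - 1 ∧ p2.totalDegree ≤ k - 1 ∧
    q1 = p1 + MvPolynomial.C a * X 0 ^ k + MvPolynomial.C b * X 0 * X 1 ^ (k - 1) ∧
    q2 = p2 + MvPolynomial.C c * X 1 ^ k + MvPolynomial.C d * X 0 ^ (k - 1) * X 1

/-- Open `i`-th subinterval of `(0,1)` for the uniform partition into `N` intervals. -/
def Ix (N i : ℕ) : Set ℝ := Set.Ioo ((i : ℝ) / N) ((i + 1 : ℝ) / N)

/-- The global displacement space `V_k(𝒯_h)` on the uniform `N × N` mesh of the unit square. -/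
def meshVk (k N : ℕ) (v1 v2 : ℝ → ℝ → ℝ) : Prop :=
  ∀ i j : ℕ, i < N → j < N → ∃ q1 q2 : MvPolynomial (Fin 2) ℝ, memVk k q1 q2 ∧
    ∀ x y : ℝ, x ∈ Ix N i → y ∈ Ix N j → v1 x y = ev2 q1 x y ∧ v2 x y = ev2 q2 x y

/-- Partial derivative in the first variable. -/
noncomputable def Dx (f : ℝ → ℝ → ℝ) (x y : ℝ) : ℝ := deriv (fun t => f t y) x

/-- Partial derivative in the second variable. -/
noncomputable def Dy (f : ℝ → ℝ → ℝ) (x y : ℝ) : ℝ := deriv (fun t => f x t) y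

/-- The global stress space `Σ_k(𝒯_h)` on the uniform `N × N` mesh of the unit square:
on each element the normal stress `(τ₁₁,τ₂₂)` belongs to the enriched BDFM space and the shear
stress `τ₁₂` to the serendipity space, `τ₁₁` is continuous in `x` across vertical edges, `τ₂₂`
is continuous in `y` across horizontal edges (`H(div)`-conformity) and `τ₁₂` is globally
continuous (`H¹`-conformity). -/
def meshSigma (k N : ℕ) (t11 t12 t22 : ℝ → ℝ → ℝ) : Prop :=
  (∀ i j : ℕ, i < N → j < N → ∃ q1 q2 q12 : MvPolynomial (Fin 2) ℝ,
    memH1 k q1 ∧ memH2 k q2 ∧ memS k q12 ∧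
    ∀ x y : ℝ, x ∈ Ix N i → y ∈ Ix N j →
      t11 x y = ev2 q1 x y ∧ t22 x y = ev2 q2 x y ∧ t12 x y = ev2 q12 x y) ∧
  (∀ y ∈ Set.Ioo (0 : ℝ) 1, (∀ j : ℕ, y ≠ (j : ℝ) / N) →
    ContinuousOn (fun x => t11 x y) (Set.Icc 0 1)) ∧
  (∀ x ∈ Set.Ioo (0 : ℝ) 1, (∀ i : ℕ, x ≠ (i : ℝ) / N) →
    ContinuousOn (fun y => t22 x y) (Set.Icc 0 1)) ∧
  ContinuousOn (fun z : ℝ × ℝ => t12 z.1 z.2) (Set.Icc 0 1 ×ˢ Set.Icc 0 1)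

/-- Iterated integral over the unit square. -/
noncomputable def ii (f : ℝ → ℝ → ℝ) : ℝ := ∫ x in (0 : ℝ)..1, ∫ y in (0 : ℝ)..1, f x y

/-- First component of the (row-wise) divergence of the symmetric tensor field. -/
noncomputable def div1 (t11 t12 : ℝ → ℝ → ℝ) (x y : ℝ) : ℝ := Dx t11 x y + Dy t12 x y

/-- Second component of the (row-wise) divergence of the symmetric tensor field. -/
noncomputable def div2 (t12 t22 : ℝ → ℝ → ℝ) (x y : ℝ) : ℝ := Dx t12 x y + Dy t22 x y

/-- The `L²(Ω)` pairing `(div τ, v)`. -/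
noncomputable def pairDiv (t11 t12 t22 v1 v2 : ℝ → ℝ → ℝ) : ℝ :=
  ii (fun x y => div1 t11 t12 x y * v1 x y + div2 t12 t22 x y * v2 x y)

/-- Squared `L²` norm of the displacement field. -/
noncomputable def vNormSq (v1 v2 : ℝ → ℝ → ℝ) : ℝ :=
  ii (fun x y => (v1 x y) ^ 2 + (v2 x y) ^ 2)

/-- Squared `H(div, Ω)` norm of the symmetric tensor field. -/
noncomputable def hdivNormSq (t11 t12 t22 : ℝ → ℝ → ℝ) : ℝ :=
  ii (fun x y => (t11 x y) ^ 2 + 2 * (t12 x y) ^ 2 + (t22 x y) ^ 2) +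
    ii (fun x y => (div1 t11 t12 x y) ^ 2 + (div2 t12 t22 x y) ^ 2)


section Aux

lemma ev2_eq (p : MvPolynomial (Fin 2) ℝ) (x y : ℝ) :
    ev2 p x y = ∑ m ∈ p.support, p.coeff m * (x ^ m 0 * y ^ m 1) := by
  rw [ev2, eval_eq']
  refine Finset.sum_congr rfl fun m _ => ?_
  rw [Fin.prod_univ_two]
  simp

lemma ev2_sum {α : Type*} (s : Finset α) (f : α → MvPolynomial (Fin 2) ℝ) (x y : ℝ) :
    ev2 (∑ a ∈ s, f a) x y = ∑ a ∈ s, ev2 (f a) x y := by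
  rw [ev2, map_sum]; rfl

lemma ev2_add (p q : MvPolynomial (Fin 2) ℝ) (x y : ℝ) :
    ev2 (p + q) x y = ev2 p x y + ev2 q x y := by rw [ev2, map_add]; rfl

lemma ev2_sub (p q : MvPolynomial (Fin 2) ℝ) (x y : ℝ) :
    ev2 (p - q) x y = ev2 p x y - ev2 q x y := by rw [ev2, map_sub]; rfl

lemma ev2_monomial (m : Fin 2 →₀ ℕ) (c : ℝ) (x y : ℝ) :
    ev2 (monomial m c) x y = c * (x ^ m 0 * y ^ m 1) := by
  rw [ev2, eval_monomial, Finsupp.prod_fintype _ _ (fun i => pow_zero _), Fin.prod_univ_two]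
  simp

lemma continuous_ev2_x (p : MvPolynomial (Fin 2) ℝ) (y : ℝ) :
    Continuous fun x : ℝ => ev2 p x y := by
  simp only [ev2_eq]; exact continuous_finset_sum _ fun m _ =>
    continuous_const.mul ((continuous_pow _).mul continuous_const)

lemma continuous_ev2_y (p : MvPolynomial (Fin 2) ℝ) (x : ℝ) :
    Continuous fun y : ℝ => ev2 p x y := by
  simp only [ev2_eq]; exact continuous_finset_sum _ fun m _ =>
    continuous_const.mul (continuous_const.mul (continuous_pow _))

/-- Formal antiderivative in `x`. -/
noncomputable def antiX (p : MvPolynomial (Fin 2) ℝ) : MvPolynomial (Fin 2) ℝ :=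
  ∑ m ∈ p.support, monomial (m + Finsupp.single 0 1) (p.coeff m / (m 0 + 1))

/-- Formal antiderivative in `y`. -/
noncomputable def antiY (p : MvPolynomial (Fin 2) ℝ) : MvPolynomial (Fin 2) ℝ :=
  ∑ m ∈ p.support, monomial (m + Finsupp.single 1 1) (p.coeff m / (m 1 + 1))

lemma hasDerivAt_antiX (p : MvPolynomial (Fin 2) ℝ) (y x : ℝ) :
    HasDerivAt (fun t => ev2 (antiX p) t y) (ev2 p x y) x := by
  have h : ∀ t : ℝ, ev2 (antiX p) t y =
      ∑ m ∈ p.support, (p.coeff m / (m 0 + 1)) * (t ^ (m 0 + 1) * y ^ m 1) := by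
    intro t
    rw [antiX, ev2_sum]
    refine Finset.sum_congr rfl fun m _ => ?_
    rw [ev2_monomial]
    simp [Finsupp.single_apply]
  rw [funext h, ev2_eq]
  apply HasDerivAt.fun_sum
  intro m _
  have hpow : HasDerivAt (fun t : ℝ => t ^ (m 0 + 1)) (((m 0 : ℝ) + 1) * x ^ m 0) x := by
    simpa using hasDerivAt_pow (m 0 + 1) x
  have h3 : HasDerivAt (fun t : ℝ => (p.coeff m / (m 0 + 1)) * (t ^ (m 0 + 1) * y ^ m 1))
      ((p.coeff m / (m 0 + 1)) * ((((m 0 : ℝ) + 1) * x ^ m 0) * y ^ m 1)) x :=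
    ((hpow.mul_const (y ^ m 1)).const_mul _)
  refine h3.congr_deriv ?_
  have hne : (m 0 : ℝ) + 1 ≠ 0 := by positivity
  field_simp

lemma hasDerivAt_antiY (p : MvPolynomial (Fin 2) ℝ) (x y : ℝ) :
    HasDerivAt (fun t => ev2 (antiY p) x t) (ev2 p x y) y := by
  have h : ∀ t : ℝ, ev2 (antiY p) x t =
      ∑ m ∈ p.support, (p.coeff m / (m 1 + 1)) * (x ^ m 0 * t ^ (m 1 + 1))  := by
    intro t
    rw [antiY, ev2_sum]
    refine Finset.sum_congr rfl fun m _ => ?_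
    rw [ev2_monomial]
    simp [Finsupp.single_apply]
  rw [funext h, ev2_eq]
  apply HasDerivAt.fun_sum
  intro m _
  have hpow : HasDerivAt (fun t : ℝ => t ^ (m 1 + 1)) (((m 1 : ℝ) + 1) * y ^ m 1) y := by
    simpa using hasDerivAt_pow (m 1 + 1) y
  have h3 : HasDerivAt (fun t : ℝ => (p.coeff m / (m 1 + 1)) * (x ^ m 0 * t ^ (m 1 + 1)))
      ((p.coeff m / (m 1 + 1)) * (x ^ m 0 * (((m 1 : ℝ) + 1) * y ^ m 1))) y :=
    (((hpow.const_mul (x ^ m 0)).const_mul _))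
  refine h3.congr_deriv ?_
  have hne : (m 1 : ℝ) + 1 ≠ 0 := by positivity
  field_simp

lemma coeff_antiX_xfree (p : MvPolynomial (Fin 2) ℝ) (m' : Fin 2 →₀ ℕ) (h : m' 0 = 0) :
    (antiX p).coeff m' = 0 := by
  rw [antiX, coeff_sum]
  refine Finset.sum_eq_zero fun m _ => ?_
  rw [coeff_monomial, if_neg]
  intro he
  rw [← he] at h
  simp at h

lemma coeff_antiY_yfree (p : MvPolynomial (Fin 2) ℝ) (m' : Fin 2 →₀ ℕ) (h : m' 1 = 0) :
    (antiY p).coeff m' = 0 := by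
  rw [antiY, coeff_sum]
  refine Finset.sum_eq_zero fun m _ => ?_
  rw [coeff_monomial, if_neg]
  intro he
  rw [← he] at h
  simp at h

lemma totalDegree_antiX_le (p : MvPolynomial (Fin 2) ℝ) :
    (antiX p).totalDegree ≤ p.totalDegree + 1 := by
  refine (totalDegree_finset_sum _ _).trans ?_
  rw [Finset.sup_le_iff]
  intro m hm
  by_cases hc : p.coeff m / (m 0 + 1) = 0
  · rw [hc]; simp
  · rw [totalDegree_monomial _ hc, Finsupp.sum_add_index' (by simp) (by intros; rfl)]
    have h2 : ((Finsupp.single (0:Fin 2) 1).sum fun _ e => e) = 1 := by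
      rw [Finsupp.sum_single_index]; rfl
    rw [h2]
    exact Nat.add_le_add_right (le_totalDegree hm) 1

lemma totalDegree_antiY_le (p : MvPolynomial (Fin 2) ℝ) :
    (antiY p).totalDegree ≤ p.totalDegree + 1 := by
  refine (totalDegree_finset_sum _ _).trans ?_
  rw [Finset.sup_le_iff]
  intro m hm
  by_cases hc : p.coeff m / (m 1 + 1) = 0
  · rw [hc]; simp
  · rw [totalDegree_monomial _ hc, Finsupp.sum_add_index' (by simp) (by intros; rfl)]
    have h2 : ((Finsupp.single (1:Fin 2) 1).sum fun _ e => e) = 1 := by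
      rw [Finsupp.sum_single_index]; rfl
    rw [h2]
    exact Nat.add_le_add_right (le_totalDegree hm) 1

lemma degreeOf_antiX_le (p : MvPolynomial (Fin 2) ℝ) :
    degreeOf 1 (antiX p) ≤ degreeOf 1 p := by
  rw [degreeOf_le_iff]
  intro m' hm'
  have h := MvPolynomial.support_sum hm'
  rw [Finset.mem_biUnion] at h
  obtain ⟨m, hm, hmem⟩ := h
  have h := support_monomial_subset hmem
  rw [Finset.mem_singleton] at h
  subst h
  have : m 1 ≤ degreeOf 1 p := monomial_le_degreeOf 1 hm
  simpa using this

lemma degreeOf_antiY_le (p : MvPolynomial (Fin 2) ℝ) :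
    degreeOf 0 (antiY p) ≤ degreeOf 0 p := by
  rw [degreeOf_le_iff]
  intro m' hm'
  have h := MvPolynomial.support_sum hm'
  rw [Finset.mem_biUnion] at h
  obtain ⟨m, hm, hmem⟩ := h
  have h := support_monomial_subset hmem
  rw [Finset.mem_singleton] at h
  subst h
  have : m 0 ≤ degreeOf 0 p := monomial_le_degreeOf 0 hm
  simpa using this

lemma antiX_monomial (m : Fin 2 →₀ ℕ) (c : ℝ) :
    antiX (monomial m c) = monomial (m + Finsupp.single 0 1) (c / (m 0 + 1)) := by
  by_cases hc : c = 0
  · simp [hc, antiX]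
  · rw [antiX, support_monomial, if_neg hc, Finset.sum_singleton, coeff_monomial, if_pos rfl]

lemma antiY_monomial (m : Fin 2 →₀ ℕ) (c : ℝ) :
    antiY (monomial m c) = monomial (m + Finsupp.single 1 1) (c / (m 1 + 1)) := by
  by_cases hc : c = 0
  · simp [hc, antiY]
  · rw [antiY, support_monomial, if_neg hc, Finset.sum_singleton, coeff_monomial, if_pos rfl]

lemma coeff_antiY_shift (p : MvPolynomial (Fin 2) ℝ) (m : Fin 2 →₀ ℕ) :
    (antiY p).coeff (m + Finsupp.single 1 1) = p.coeff m / (m 1 + 1) := by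
  rw [antiY, coeff_sum]
  rw [Finset.sum_eq_single m]
  · rw [coeff_monomial, if_pos rfl]
  · intro m' _ hne
    rw [coeff_monomial, if_neg]
    exact fun he => hne (add_right_cancel he)
  · intro hm
    rw [MvPolynomial.notMem_support_iff.mp hm]
    simp

lemma antiY_add (p q : MvPolynomial (Fin 2) ℝ) : antiY (p + q) = antiY p + antiY q := by
  apply MvPolynomial.ext
  intro m'
  by_cases h0 : m' 1 = 0
  · rw [coeff_add, coeff_antiY_yfree _ _ h0, coeff_antiY_yfree _ _ h0,
      coeff_antiY_yfree _ _ h0]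
    simp
  · have hm' : m' = (m' - Finsupp.single 1 1) + Finsupp.single 1 1 := by
      ext a
      by_cases ha : a = 1
      · subst ha
        simp only [Finsupp.add_apply, Finsupp.tsub_apply, Finsupp.single_apply]
        norm_num
        omega
      · have ha' : Finsupp.single (1 : Fin 2) 1 a = 0 := by
          rw [Finsupp.single_apply, if_neg (fun h => ha h.symm)]
        simp [Finsupp.add_apply, Finsupp.tsub_apply, ha']
    rw [hm', coeff_add, coeff_antiY_shift, coeff_antiY_shift, coeff_antiY_shift, coeff_add,
      add_div]

lemma coeff_antiX_shift (p : MvPolynomial (Fin 2) ℝ) (m : Fin 2 →₀ ℕ) :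
    (antiX p).coeff (m + Finsupp.single 0 1) = p.coeff m / (m 0 + 1) := by
  rw [antiX, coeff_sum]
  rw [Finset.sum_eq_single m]
  · rw [coeff_monomial, if_pos rfl]
  · intro m' _ hne
    rw [coeff_monomial, if_neg]
    exact fun he => hne (add_right_cancel he)
  · intro hm
    rw [MvPolynomial.notMem_support_iff.mp hm]
    simp

lemma antiX_add (p q : MvPolynomial (Fin 2) ℝ) : antiX (p + q) = antiX p + antiX q := by
  apply MvPolynomial.ext
  intro m'
  by_cases h0 : m' 0 = 0
  · rw [coeff_add, coeff_antiX_xfree _ _ h0, coeff_antiX_xfree _ _ h0,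
      coeff_antiX_xfree _ _ h0]
    simp
  · have hm' : m' = (m' - Finsupp.single 0 1) + Finsupp.single 0 1 := by
      ext a
      by_cases ha : a = 0
      · subst ha
        simp only [Finsupp.add_apply, Finsupp.tsub_apply, Finsupp.single_apply]
        norm_num
        omega
      · have ha' : Finsupp.single (0 : Fin 2) 1 a = 0 := by
          rw [Finsupp.single_apply, if_neg (fun h => ha h.symm)]
        simp [Finsupp.add_apply, Finsupp.tsub_apply, ha']
    rw [hm', coeff_add, coeff_antiX_shift, coeff_antiX_shift, coeff_antiX_shift, coeff_add,
      add_div]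

noncomputable def pEvX (p : MvPolynomial (Fin 2) ℝ) (x0 : ℝ) : MvPolynomial (Fin 2) ℝ :=
  ∑ m ∈ p.support, monomial (Finsupp.single 1 (m 1)) (p.coeff m * x0 ^ m 0)

noncomputable def pEvY (p : MvPolynomial (Fin 2) ℝ) (y0 : ℝ) : MvPolynomial (Fin 2) ℝ :=
  ∑ m ∈ p.support, monomial (Finsupp.single 0 (m 0)) (p.coeff m * y0 ^ m 1)

lemma ev2_pEvX (p : MvPolynomial (Fin 2) ℝ) (x0 x y : ℝ) :
    ev2 (pEvX p x0) x y = ev2 p x0 y := by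
  rw [pEvX, ev2_sum, ev2_eq]
  refine Finset.sum_congr rfl fun m _ => ?_
  rw [ev2_monomial]
  simp [Finsupp.single_apply]
  ring

lemma ev2_pEvY (p : MvPolynomial (Fin 2) ℝ) (y0 x y : ℝ) :
    ev2 (pEvY p y0) x y = ev2 p x y0 := by
  rw [pEvY, ev2_sum, ev2_eq]
  refine Finset.sum_congr rfl fun m _ => ?_
  rw [ev2_monomial]
  simp [Finsupp.single_apply]
  ring

lemma totalDegree_pEvX_le (p : MvPolynomial (Fin 2) ℝ) (x0 : ℝ) :
    (pEvX p x0).totalDegree ≤ degreeOf 1 p := by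
  refine (totalDegree_finset_sum _ _).trans ?_
  rw [Finset.sup_le_iff]
  intro m hm
  refine (totalDegree_monomial_le _ _).trans ?_
  have : ((Finsupp.single (1 : Fin 2) (m 1)).sum fun _ => id) = m 1 := by
    rw [Finsupp.sum_single_index]; rfl; rfl
  rw [this]
  exact monomial_le_degreeOf 1 hm

lemma totalDegree_pEvY_le (p : MvPolynomial (Fin 2) ℝ) (y0 : ℝ) :
    (pEvY p y0).totalDegree ≤ degreeOf 0 p := by
  refine (totalDegree_finset_sum _ _).trans ?_
  rw [Finset.sup_le_iff]
  intro m hm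
  refine (totalDegree_monomial_le _ _).trans ?_
  have : ((Finsupp.single (0 : Fin 2) (m 0)).sum fun _ => id) = m 0 := by
    rw [Finsupp.sum_single_index]; rfl; rfl
  rw [this]
  exact monomial_le_degreeOf 0 hm

lemma coeff_single_of_totalDegree_lt (p : MvPolynomial (Fin 2) ℝ) (i : Fin 2) (k : ℕ)
    (h : p.totalDegree < k) : p.coeff (Finsupp.single i k) = 0 := by
  apply coeff_eq_zero_of_totalDegree_lt
  have : ∑ j ∈ (Finsupp.single i k).support, (Finsupp.single i k) j = k := by
    by_cases hk : k = 0
    · subst hk; simp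
    · rw [Finsupp.support_single_ne_zero _ hk, Finset.sum_singleton, Finsupp.single_eq_same]
  omega

lemma antiX_Ca_X0k (a : ℝ) (k : ℕ) :
    antiX (MvPolynomial.C a * X 0 ^ k) = MvPolynomial.C (a / (k + 1)) * X 0 ^ (k + 1) := by
  rw [C_mul_X_pow_eq_monomial, antiX_monomial, C_mul_X_pow_eq_monomial,
    ← Finsupp.single_add, Finsupp.single_eq_same]

lemma antiX_Cb_mixed (b : ℝ) (j : ℕ) :
    antiX (MvPolynomial.C b * X 0 * X 1 ^ j) = MvPolynomial.C (b / 2) * X 0 ^ 2 * X 1 ^ j := by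
  have h1 : (MvPolynomial.C b * X 0 * X 1 ^ j : MvPolynomial (Fin 2) ℝ)
      = monomial (Finsupp.single 0 1 + Finsupp.single 1 j) b := by
    rw [C_mul_X_eq_monomial, X_pow_eq_monomial, monomial_mul, mul_one]
  have h2 : (MvPolynomial.C (b/2) * X 0 ^ 2 * X 1 ^ j : MvPolynomial (Fin 2) ℝ)
      = monomial (Finsupp.single 0 2 + Finsupp.single 1 j) (b/2) := by
    rw [C_mul_X_pow_eq_monomial, X_pow_eq_monomial, monomial_mul, mul_one]
  rw [h1, antiX_monomial, h2]
  have hm : ((Finsupp.single (0:Fin 2) 1 + Finsupp.single 1 j : Fin 2 →₀ ℕ)) 0 = 1 := by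
    simp [Finsupp.single_apply]
  rw [hm]
  have : Finsupp.single (0:Fin 2) 1 + Finsupp.single 1 j + Finsupp.single 0 1
      = Finsupp.single 0 2 + Finsupp.single 1 j := by
    ext a'
    simp [Finsupp.single_apply]
    split <;> omega
  rw [this]
  norm_num

lemma antiY_Ca_X1k (a : ℝ) (k : ℕ) :
    antiY (MvPolynomial.C a * X 1 ^ k) = MvPolynomial.C (a / (k + 1)) * X 1 ^ (k + 1) := by
  rw [C_mul_X_pow_eq_monomial, antiY_monomial, C_mul_X_pow_eq_monomial,
    ← Finsupp.single_add, Finsupp.single_eq_same]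

lemma antiY_Cd_mixed (d : ℝ) (j : ℕ) :
    antiY (MvPolynomial.C d * X 0 ^ j * X 1) = MvPolynomial.C (d / 2) * X 1 ^ 2 * X 0 ^ j := by
  have h1 : (MvPolynomial.C d * X 0 ^ j * X 1 : MvPolynomial (Fin 2) ℝ)
      = monomial (Finsupp.single 0 j + Finsupp.single 1 1) d := by
    rw [C_mul_X_pow_eq_monomial, ← pow_one (X 1 : MvPolynomial (Fin 2) ℝ),
      X_pow_eq_monomial, monomial_mul, mul_one]
  have h2 : (MvPolynomial.C (d/2) * X 1 ^ 2 * X 0 ^ j : MvPolynomial (Fin 2) ℝ)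
      = monomial (Finsupp.single 1 2 + Finsupp.single 0 j) (d/2) := by
    rw [C_mul_X_pow_eq_monomial, X_pow_eq_monomial, monomial_mul, mul_one]
  rw [h1, antiY_monomial, h2]
  have hm : ((Finsupp.single (0:Fin 2) j + Finsupp.single 1 1 : Fin 2 →₀ ℕ)) 1 = 1 := by
    simp [Finsupp.single_apply]
  rw [hm]
  have : Finsupp.single (0:Fin 2) j + Finsupp.single 1 1 + Finsupp.single 1 1
      = Finsupp.single 1 2 + Finsupp.single 0 j := by
    ext a'
    simp [Finsupp.single_apply]
    split_ifs <;> omega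
  rw [this]
  norm_num

lemma memH1_construct (k : ℕ) (hk : 1 ≤ k) (p1 : MvPolynomial (Fin 2) ℝ) (a b : ℝ)
    (hp1 : p1.totalDegree ≤ k - 1) (G : MvPolynomial (Fin 2) ℝ) (hG : G.totalDegree ≤ k - 1) :
    memH1 k (antiX (p1 + MvPolynomial.C a * X 0 ^ k + MvPolynomial.C b * X 0 * X 1 ^ (k - 1)) + G) := by
  refine ⟨antiX p1 + G, a / (k + 1), b / 2, ⟨?_, ?_⟩, ?_⟩
  · refine (totalDegree_add _ _).trans (max_le ?_ (hG.trans (by omega)))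
    exact (totalDegree_antiX_le p1).trans (by omega)
  · rw [coeff_add, coeff_antiX_xfree _ _ (by simp [Finsupp.single_apply]),
      coeff_single_of_totalDegree_lt _ _ _ (by omega), add_zero]
  · rw [antiX_add, antiX_add, antiX_Ca_X0k, antiX_Cb_mixed]
    ring

lemma memH2_construct (k : ℕ) (hk : 1 ≤ k) (p2 : MvPolynomial (Fin 2) ℝ) (c d : ℝ)
    (hp2 : p2.totalDegree ≤ k - 1) (G : MvPolynomial (Fin 2) ℝ) (hG : G.totalDegree ≤ k - 1) :
    memH2 k (antiY (p2 + MvPolynomial.C c * X 1 ^ k + MvPolynomial.C d * X 0 ^ (k - 1) * X 1) + G) := by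
  refine ⟨antiY p2 + G, c / (k + 1), d / 2, ⟨?_, ?_⟩, ?_⟩
  · refine (totalDegree_add _ _).trans (max_le ?_ (hG.trans (by omega)))
    exact (totalDegree_antiY_le p2).trans (by omega)
  · rw [coeff_add, coeff_antiY_yfree _ _ (by simp [Finsupp.single_apply]),
      coeff_single_of_totalDegree_lt _ _ _ (by omega), add_zero]
  · rw [antiY_add, antiY_add, antiY_Ca_X1k, antiY_Cd_mixed]
    ring

/-! ### Integration utilities -/

open MeasureTheory Set

lemma ae_ne_left (d : ℝ) : ∀ᵐ x : ℝ ∂volume, x ≠ d := by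
  have : volume ({d} : Set ℝ) = 0 := measure_singleton d
  rw [Filter.eventually_iff, mem_ae_iff]
  convert this using 2
  ext x
  simp

lemma intervalIntegral_congr_Ioo {f g : ℝ → ℝ} {c d : ℝ} (hcd : c ≤ d)
    (h : ∀ s ∈ Set.Ioo c d, f s = g s) :
    ∫ s in c..d, f s = ∫ s in c..d, g s := by
  apply intervalIntegral.integral_congr_ae
  filter_upwards [ae_ne_left d] with x hx hmem
  rw [Set.uIoc_of_le hcd] at hmem
  exact h x ⟨hmem.1, lt_of_le_of_ne hmem.2 hx⟩

lemma intervalIntegrable_of_eq_Ioo {f g : ℝ → ℝ} {c d : ℝ} (hcd : c ≤ d)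
    (hg : Continuous g) (h : ∀ s ∈ Set.Ioo c d, f s = g s) :
    IntervalIntegrable f volume c d := by
  rw [intervalIntegrable_iff_integrableOn_Ioc_of_le hcd]
  have hres : volume.restrict (Set.Ioc c d) = volume.restrict (Set.Ioo c d) :=
    (Measure.restrict_congr_set (Ioo_ae_eq_Ioc (μ := volume) (a := c) (b := d))).symm
  have hae : f =ᵐ[volume.restrict (Set.Ioc c d)] g := by
    rw [hres]
    exact ae_restrict_of_forall_mem measurableSet_Ioo h
  exact (IntegrableOn.congr_fun_ae
    ((hg.intervalIntegrable c d).1) hae.symm)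

lemma integral_eq_of_eq_Ioo {f g F : ℝ → ℝ} {c d c' d' : ℝ} (hg : Continuous g)
    (hF : ∀ t, HasDerivAt F (g t) t) (h : ∀ s ∈ Set.Ioo c d, f s = g s)
    (hcc' : c ≤ c') (hc'd' : c' ≤ d') (hd'd : d' ≤ d) :
    ∫ s in c'..d', f s = F d' - F c' := by
  have h1 : ∫ s in c'..d', f s = ∫ s in c'..d', g s :=
    intervalIntegral_congr_Ioo hc'd' fun s hs =>
      h s ⟨lt_of_le_of_lt hcc' hs.1, lt_of_lt_of_le hs.2 hd'd⟩
  rw [h1]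
  exact intervalIntegral.integral_eq_sub_of_hasDerivAt
    (fun t _ => hF t) (hg.intervalIntegrable c' d')

/-- gridfree points. -/
def gridfree (N : ℕ) (x : ℝ) : Prop :=
  x ∈ Set.Ioo (0:ℝ) 1 ∧ ∀ i : ℕ, x ≠ (i : ℝ) / N

lemma grid_mono {N : ℕ} (hN : 0 < N) {i j : ℕ} (hij : i ≤ j) :
    (i : ℝ) / N ≤ (j : ℝ) / N := by
  apply div_le_div_of_nonneg_right ?_ (by positivity)
  exact_mod_cast hij

lemma grid_nonneg {N i : ℕ} : (0:ℝ) ≤ (i : ℝ) / N := by positivity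

lemma grid_le_one {N : ℕ} (hN : 0 < N) {i : ℕ} (hi : i ≤ N) : (i : ℝ) / N ≤ 1 := by
  rw [div_le_one (by exact_mod_cast hN)]
  exact_mod_cast hi

lemma grid_zero {N : ℕ} : ((0:ℕ) : ℝ) / N = 0 := by simp

lemma grid_last {N : ℕ} (hN : 0 < N) : ((N:ℕ) : ℝ) / N = 1 := by
  have : (N:ℝ) ≠ 0 := by exact_mod_cast hN.ne'
  rw [div_eq_one_iff_eq this]

lemma grid_lt_succ {N : ℕ} (hN : 0 < N) (i : ℕ) : (i : ℝ) / N < ((i:ℝ) + 1) / N := by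
  have hNR : (0:ℝ) < N := by exact_mod_cast hN
  rw [div_lt_div_iff₀ hNR hNR]
  nlinarith

lemma Ix_subset (hN : 0 < N) {i : ℕ} (hi : i < N) : Ix N i ⊆ Set.Ioo (0:ℝ) 1 := by
  intro x hx
  obtain ⟨h1, h2⟩ := hx
  constructor
  · exact lt_of_le_of_lt grid_nonneg h1
  · have : ((i:ℝ) + 1) / N ≤ 1 := by
      have : ((i+1:ℕ) : ℝ) / N ≤ 1 := grid_le_one hN hi
      push_cast at this
      exact this
    exact lt_of_lt_of_le h2 this

lemma gridfree_mem_Ix {N : ℕ} (hN : 0 < N) {x : ℝ} (hx : gridfree N x) :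
    ∃ i, i < N ∧ x ∈ Ix N i := by
  obtain ⟨⟨hx0, hx1⟩, hg⟩ := hx
  have hNR : (0:ℝ) < N := by exact_mod_cast hN
  refine ⟨⌊x * N⌋₊, ?_, ?_, ?_⟩
  · have : (⌊x * N⌋₊ : ℝ) ≤ x * N := Nat.floor_le (by positivity)
    have h2 : x * N < N := by nlinarith
    have : (⌊x * N⌋₊ : ℝ) < (N : ℝ) := lt_of_le_of_lt this h2
    exact_mod_cast this
  · have h1 : (⌊x * N⌋₊ : ℝ) ≤ x * N := Nat.floor_le (by positivity)
    have h2 : (⌊x * N⌋₊ : ℝ) / N ≤ x := by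
      rw [div_le_iff₀ hNR]; linarith
    rcases lt_or_eq_of_le h2 with h | h
    · exact h
    · exact absurd h.symm (hg ⌊x * N⌋₊)
  · have h1 : x * N < ⌊x * N⌋₊ + 1 := Nat.lt_floor_add_one _
    rw [lt_div_iff₀ hNR]
    linarith

/-- cell polynomials predicate -/
def CP (N : ℕ) (f : ℝ → ℝ → ℝ) (Q : ℕ → ℕ → MvPolynomial (Fin 2) ℝ) : Prop :=
  ∀ i, i < N → ∀ j, j < N → ∀ x ∈ Ix N i, ∀ y ∈ Ix N j, f x y = ev2 (Q i j) x y

/-- Piecewise-continuous on the mesh in 1D. -/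
def CW (N : ℕ) (f : ℝ → ℝ) : Prop :=
  ∀ i, i < N → ∃ g : ℝ → ℝ, Continuous g ∧ ∀ x ∈ Ix N i, f x = g x

lemma CW.intervalIntegrable_cell {N : ℕ} {f : ℝ → ℝ} (hN : 0 < N) (hf : CW N f)
    {i : ℕ} (hi : i < N) : IntervalIntegrable f volume ((i:ℝ)/N) (((i:ℝ)+1)/N) := by
  obtain ⟨g, hg, he⟩ := hf i hi
  exact intervalIntegrable_of_eq_Ioo (grid_lt_succ hN i).le hg he

lemma CW.intervalIntegrable_to_grid {N : ℕ} {f : ℝ → ℝ} (hN : 0 < N) (hf : CW N f)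
    {m : ℕ} (hm : m ≤ N) : IntervalIntegrable f volume 0 ((m:ℝ)/N) := by
  induction m with
  | zero => simp [IntervalIntegrable.refl]
  | succ m ih =>
    have h1 : IntervalIntegrable f volume 0 ((m:ℝ)/N) := ih (le_of_lt hm)
    have h2 : IntervalIntegrable f volume ((m:ℝ)/N) (((m:ℝ)+1)/N) :=
      hf.intervalIntegrable_cell hN (by omega)
    have : ((m+1:ℕ):ℝ)/N = ((m:ℝ)+1)/N := by push_cast; ring
    rw [this]
    exact h1.trans h2

lemma CW.intervalIntegrable01 {N : ℕ} {f : ℝ → ℝ} (hN : 0 < N) (hf : CW N f) :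
    IntervalIntegrable f volume 0 1 := by
  have := hf.intervalIntegrable_to_grid hN (le_refl N)
  rwa [grid_last hN] at this

lemma CW.intervalIntegrable_sub {N : ℕ} {f : ℝ → ℝ} (hN : 0 < N) (hf : CW N f)
    {a b : ℝ} (ha : a ∈ Set.Icc (0:ℝ) 1) (hb : b ∈ Set.Icc (0:ℝ) 1) :
    IntervalIntegrable f volume a b := by
  refine (hf.intervalIntegrable01 hN).mono_set ?_
  rw [Set.uIcc_of_le zero_le_one]
  exact Set.uIcc_subset_Icc ha hb

lemma CW.integrableOn_Icc01 {N : ℕ} {f : ℝ → ℝ} (hN : 0 < N) (hf : CW N f) :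
    IntegrableOn f (Set.Icc (0:ℝ) 1) volume :=
  (integrableOn_Icc_iff_integrableOn_Ioc).mpr
    ((intervalIntegrable_iff_integrableOn_Ioc_of_le zero_le_one).mp (hf.intervalIntegrable01 hN))

lemma CW.integral01_eq_sum {N : ℕ} {f : ℝ → ℝ} (hN : 0 < N) (hf : CW N f) :
    ∫ t in (0:ℝ)..1, f t
      = ∑ i ∈ Finset.range N, ∫ t in ((i:ℝ)/N)..(((i:ℝ)+1)/N), f t := by
  have h := intervalIntegral.sum_integral_adjacent_intervals (μ := volume)
    (a := fun k : ℕ => (k:ℝ)/N) (n := N) (f := f) ?_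
  · rw [grid_zero, grid_last hN] at h
    rw [← h]
    refine Finset.sum_congr rfl fun i _ => ?_
    have : ((i+1:ℕ):ℝ)/N = ((i:ℝ)+1)/N := by push_cast; ring
    rw [this]
  · intro k hk
    have h2 := hf.intervalIntegrable_cell hN hk
    have : ((k+1:ℕ):ℝ)/N = ((k:ℝ)+1)/N := by push_cast; ring
    simpa [this] using h2

lemma intXpoly (q : MvPolynomial (Fin 2) ℝ) (y c d : ℝ) :
    ∫ s in c..d, ev2 q s y = ev2 (antiX q) d y - ev2 (antiX q) c y :=
  intervalIntegral.integral_eq_sub_of_hasDerivAt (fun t _ => hasDerivAt_antiX q y t)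
    ((continuous_ev2_x q y).intervalIntegrable c d)

lemma intYpoly (q : MvPolynomial (Fin 2) ℝ) (x c d : ℝ) :
    ∫ t in c..d, ev2 q x t = ev2 (antiY q) x d - ev2 (antiY q) x c :=
  intervalIntegral.integral_eq_sub_of_hasDerivAt (fun t _ => hasDerivAt_antiY q x t)
    ((continuous_ev2_y q x).intervalIntegrable c d)

lemma CP.innerCW {N : ℕ} {f : ℝ → ℝ → ℝ} {Q : ℕ → ℕ → MvPolynomial (Fin 2) ℝ}
    (hf : CP N f Q) {i : ℕ} (hi : i < N) {x : ℝ} (hx : x ∈ Ix N i) :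
    CW N (fun y => f x y) := by
  intro j hj
  exact ⟨fun y => ev2 (Q i j) x y, continuous_ev2_y _ x, fun y hy => hf i hi j hj x hx y hy⟩

lemma CP.innerCW' {N : ℕ} {f : ℝ → ℝ → ℝ} {Q : ℕ → ℕ → MvPolynomial (Fin 2) ℝ}
    (hf : CP N f Q) {j : ℕ} (hj : j < N) {y : ℝ} (hy : y ∈ Ix N j) :
    CW N (fun x => f x y) := by
  intro i hi
  exact ⟨fun x => ev2 (Q i j) x y, continuous_ev2_x _ y, fun x hx => hf i hi j hj x hx y hy⟩

lemma CP.row_formula {N : ℕ} {f : ℝ → ℝ → ℝ} {Q : ℕ → ℕ → MvPolynomial (Fin 2) ℝ}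
    (hN : 0 < N) (hf : CP N f Q) {i : ℕ} (hi : i < N) {x : ℝ} (hx : x ∈ Ix N i) :
    (∫ y in (0:ℝ)..1, f x y)
      = ∑ j ∈ Finset.range N, ∫ y in ((j:ℝ)/N)..(((j:ℝ)+1)/N), ev2 (Q i j) x y := by
  rw [(hf.innerCW hi hx).integral01_eq_sum hN]
  refine Finset.sum_congr rfl fun j hj => ?_
  exact intervalIntegral_congr_Ioo (grid_lt_succ hN j).le
    (fun y hy => hf i hi j (Finset.mem_range.mp hj) x hx y hy)

lemma CP.col_formula {N : ℕ} {f : ℝ → ℝ → ℝ} {Q : ℕ → ℕ → MvPolynomial (Fin 2) ℝ}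
    (hN : 0 < N) (hf : CP N f Q) {j : ℕ} (hj : j < N) {y : ℝ} (hy : y ∈ Ix N j) :
    (∫ x in (0:ℝ)..1, f x y)
      = ∑ i ∈ Finset.range N, ∫ x in ((i:ℝ)/N)..(((i:ℝ)+1)/N), ev2 (Q i j) x y := by
  rw [(hf.innerCW' hj hy).integral01_eq_sum hN]
  refine Finset.sum_congr rfl fun i hi => ?_
  exact intervalIntegral_congr_Ioo (grid_lt_succ hN i).le
    (fun x hx => hf i (Finset.mem_range.mp hi) j hj x hx y hy)

lemma CP.rowCW {N : ℕ} {f : ℝ → ℝ → ℝ} {Q : ℕ → ℕ → MvPolynomial (Fin 2) ℝ}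
    (hN : 0 < N) (hf : CP N f Q) : CW N (fun x => ∫ y in (0:ℝ)..1, f x y) := by
  intro i hi
  refine ⟨fun x => ∑ j ∈ Finset.range N,
    (ev2 (antiY (Q i j)) x (((j:ℝ)+1)/N) - ev2 (antiY (Q i j)) x ((j:ℝ)/N)), ?_, ?_⟩
  · exact continuous_finset_sum _ fun j _ =>
      (continuous_ev2_x _ _).sub (continuous_ev2_x _ _)
  · intro x hx
    show (∫ y in (0:ℝ)..1, f x y) = _
    rw [hf.row_formula hN hi hx]
    refine Finset.sum_congr rfl fun j _ => ?_
    exact intYpoly _ _ _ _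

lemma CP.colCW {N : ℕ} {f : ℝ → ℝ → ℝ} {Q : ℕ → ℕ → MvPolynomial (Fin 2) ℝ}
    (hN : 0 < N) (hf : CP N f Q) : CW N (fun y => ∫ x in (0:ℝ)..1, f x y) := by
  intro j hj
  refine ⟨fun y => ∑ i ∈ Finset.range N,
    (ev2 (antiX (Q i j)) (((i:ℝ)+1)/N) y - ev2 (antiX (Q i j)) ((i:ℝ)/N) y), ?_, ?_⟩
  · exact continuous_finset_sum _ fun i _ =>
      (continuous_ev2_y _ _).sub (continuous_ev2_y _ _)
  · intro y hy
    show (∫ x in (0:ℝ)..1, f x y) = _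
    rw [hf.col_formula hN hj hy]
    refine Finset.sum_congr rfl fun i _ => ?_
    exact intXpoly _ _ _ _

lemma ae_gridfree {N : ℕ} (hN : 0 < N) :
    ∀ᵐ x : ℝ ∂volume, x ∈ Set.uIoc (0:ℝ) 1 → gridfree N x := by
  have hS : volume ((fun i : ℕ => (i:ℝ)/N) '' (Set.Iic N)) = 0 :=
    ((Set.finite_Iic N).image _).measure_zero _
  rw [Filter.eventually_iff, mem_ae_iff]
  apply measure_mono_null _ hS
  intro x hx
  simp only [Set.mem_compl_iff, Set.mem_setOf_eq, Classical.not_imp] at hx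
  obtain ⟨hmem, hng⟩ := hx
  rw [Set.uIoc_of_le zero_le_one] at hmem
  by_cases h1 : x = 1
  · refine ⟨N, Set.mem_Iic.mpr le_rfl, ?_⟩
    show (N:ℝ)/N = x
    rw [grid_last hN, h1]
  · have hIoo : x ∈ Set.Ioo (0:ℝ) 1 := ⟨hmem.1, lt_of_le_of_ne hmem.2 h1⟩
    rw [gridfree, not_and] at hng
    have := hng hIoo
    push_neg at this
    obtain ⟨i, hi⟩ := this
    refine ⟨i, Set.mem_Iic.mpr ?_, hi.symm⟩
    by_contra hgt
    push_neg at hgt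
    have hNR : (0:ℝ) < N := by exact_mod_cast hN
    have : (1:ℝ) < (i:ℝ)/N := by
      rw [lt_div_iff₀ hNR]
      have : (N:ℝ) + 1 ≤ (i:ℝ) := by exact_mod_cast hgt
      linarith
    rw [← hi] at this
    linarith [hIoo.2]

lemma ii_congr_gridfree {N : ℕ} (hN : 0 < N) {f g : ℝ → ℝ → ℝ}
    (h : ∀ x, gridfree N x → ∀ y, gridfree N y → f x y = g x y) : ii f = ii g := by
  rw [ii, ii]
  apply intervalIntegral.integral_congr_ae
  filter_upwards [ae_gridfree hN] with x hx hmem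
  apply intervalIntegral.integral_congr_ae
  filter_upwards [ae_gridfree hN] with y hy hmem'
  exact h x (hx hmem) y (hy hmem')

lemma ii_nonneg {f : ℝ → ℝ → ℝ} (h : ∀ x y, 0 ≤ f x y) : 0 ≤ ii f := by
  rw [ii]
  apply intervalIntegral.integral_nonneg zero_le_one
  intro x _
  exact intervalIntegral.integral_nonneg zero_le_one (fun y _ => h x y)

lemma ii_add' {N : ℕ} (hN : 0 < N) {f g : ℝ → ℝ → ℝ}
    {Q R : ℕ → ℕ → MvPolynomial (Fin 2) ℝ} (hf : CP N f Q) (hg : CP N g R) :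
    ii (fun x y => f x y + g x y) = ii f + ii g := by
  rw [ii]
  have step1 : ∫ x in (0:ℝ)..1, (∫ y in (0:ℝ)..1, (f x y + g x y))
      = ∫ x in (0:ℝ)..1, ((∫ y in (0:ℝ)..1, f x y) + (∫ y in (0:ℝ)..1, g x y)) := by
    apply intervalIntegral.integral_congr_ae
    filter_upwards [ae_gridfree hN] with x hx hmem
    obtain ⟨i, hi, hxi⟩ := gridfree_mem_Ix hN (hx hmem)
    exact intervalIntegral.integral_add
      ((hf.innerCW hi hxi).intervalIntegrable01 hN)
      ((hg.innerCW hi hxi).intervalIntegrable01 hN)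
  rw [step1]
  rw [intervalIntegral.integral_add ((hf.rowCW hN).intervalIntegrable01 hN)
    ((hg.rowCW hN).intervalIntegrable01 hN)]
  rfl

lemma interval_swap_cont (F : ℝ → ℝ → ℝ) (hF : Continuous fun z : ℝ × ℝ => F z.1 z.2)
    {a b c d : ℝ} (hab : a ≤ b) (hcd : c ≤ d) :
    ∫ x in a..b, (∫ y in c..d, F x y) = ∫ y in c..d, ∫ x in a..b, F x y := by
  have hInt : Integrable (Function.uncurry F)
      ((volume.restrict (Set.Ioc a b)).prod (volume.restrict (Set.Ioc c d))) := by
    rw [Measure.prod_restrict]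
    have hsub : Set.Ioc a b ×ˢ Set.Ioc c d ⊆ Set.Icc a b ×ˢ Set.Icc c d :=
      Set.prod_mono Set.Ioc_subset_Icc_self Set.Ioc_subset_Icc_self
    have hK : IsCompact (Set.Icc a b ×ˢ Set.Icc c d) := isCompact_Icc.prod isCompact_Icc
    have : IntegrableOn (Function.uncurry F) (Set.Icc a b ×ˢ Set.Icc c d)
        (volume.prod volume) := ContinuousOn.integrableOn_compact hK hF.continuousOn
    exact this.mono_set hsub
  have h1 : ∀ x : ℝ, (∫ y in c..d, F x y) = ∫ y, F x y ∂(volume.restrict (Set.Ioc c d)) :=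
    fun x => intervalIntegral.integral_of_le hcd
  have h2 : ∀ y : ℝ, (∫ x in a..b, F x y) = ∫ x, F x y ∂(volume.restrict (Set.Ioc a b)) :=
    fun y => intervalIntegral.integral_of_le hab
  simp_rw [h1, h2, intervalIntegral.integral_of_le hab, intervalIntegral.integral_of_le hcd]
  exact MeasureTheory.integral_integral_swap hInt

lemma continuous_ev2 (p : MvPolynomial (Fin 2) ℝ) :
    Continuous fun z : ℝ × ℝ => ev2 p z.1 z.2 := by
  simp only [ev2_eq]
  exact continuous_finset_sum _ fun m _ =>
    continuous_const.mul ((continuous_fst.pow _).mul (continuous_snd.pow _))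

lemma ii_eq_sum_blocks {N : ℕ} (hN : 0 < N) {f : ℝ → ℝ → ℝ}
    {Q : ℕ → ℕ → MvPolynomial (Fin 2) ℝ} (hf : CP N f Q) :
    ii f = ∑ i ∈ Finset.range N, ∑ j ∈ Finset.range N,
      ∫ x in ((i:ℝ)/N)..(((i:ℝ)+1)/N), ∫ y in ((j:ℝ)/N)..(((j:ℝ)+1)/N), ev2 (Q i j) x y := by
  rw [ii, (hf.rowCW hN).integral01_eq_sum hN]
  refine Finset.sum_congr rfl fun i hi => ?_
  have hi' := Finset.mem_range.mp hi
  have hcongr : ∫ x in ((i:ℝ)/N)..(((i:ℝ)+1)/N), (∫ y in (0:ℝ)..1, f x y)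
      = ∫ x in ((i:ℝ)/N)..(((i:ℝ)+1)/N), (∑ j ∈ Finset.range N,
          ∫ y in ((j:ℝ)/N)..(((j:ℝ)+1)/N), ev2 (Q i j) x y) := by
    apply intervalIntegral_congr_Ioo (grid_lt_succ hN i).le
    intro x hx
    rw [hf.row_formula hN hi' hx]
  rw [hcongr]
  apply intervalIntegral.integral_finset_sum
  intro j _
  have he : (fun x => ∫ y in ((j:ℝ)/N)..(((j:ℝ)+1)/N), ev2 (Q i j) x y)
      = fun x => ev2 (antiY (Q i j)) x (((j:ℝ)+1)/N) - ev2 (antiY (Q i j)) x ((j:ℝ)/N) :=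
    funext fun x => intYpoly _ _ _ _
  rw [he]
  exact ((continuous_ev2_x _ _).sub (continuous_ev2_x _ _)).intervalIntegrable _ _

lemma ii_swap {N : ℕ} (hN : 0 < N) {f : ℝ → ℝ → ℝ}
    {Q : ℕ → ℕ → MvPolynomial (Fin 2) ℝ} (hf : CP N f Q) :
    ii f = ∫ y in (0:ℝ)..1, ∫ x in (0:ℝ)..1, f x y := by
  have hRHS : (∫ y in (0:ℝ)..1, ∫ x in (0:ℝ)..1, f x y)
      = ∑ j ∈ Finset.range N, ∑ i ∈ Finset.range N,
        ∫ y in ((j:ℝ)/N)..(((j:ℝ)+1)/N), ∫ x in ((i:ℝ)/N)..(((i:ℝ)+1)/N), ev2 (Q i j) x y := by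
    rw [(hf.colCW hN).integral01_eq_sum hN]
    refine Finset.sum_congr rfl fun j hj => ?_
    have hj' := Finset.mem_range.mp hj
    have hcongr : ∫ y in ((j:ℝ)/N)..(((j:ℝ)+1)/N), (∫ x in (0:ℝ)..1, f x y)
        = ∫ y in ((j:ℝ)/N)..(((j:ℝ)+1)/N), (∑ i ∈ Finset.range N,
            ∫ x in ((i:ℝ)/N)..(((i:ℝ)+1)/N), ev2 (Q i j) x y) := by
      apply intervalIntegral_congr_Ioo (grid_lt_succ hN j).le
      intro y hy
      rw [hf.col_formula hN hj' hy]
    rw [hcongr]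
    apply intervalIntegral.integral_finset_sum
    intro i _
    have he : (fun y => ∫ x in ((i:ℝ)/N)..(((i:ℝ)+1)/N), ev2 (Q i j) x y)
        = fun y => ev2 (antiX (Q i j)) (((i:ℝ)+1)/N) y - ev2 (antiX (Q i j)) ((i:ℝ)/N) y :=
      funext fun y => intXpoly _ _ _ _
    rw [he]
    exact ((continuous_ev2_y _ _).sub (continuous_ev2_y _ _)).intervalIntegrable _ _
  rw [hRHS, ii_eq_sum_blocks hN hf, Finset.sum_comm]
  refine Finset.sum_congr rfl fun j _ => Finset.sum_congr rfl fun i _ => ?_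
  exact interval_swap_cont _ (continuous_ev2 _) (grid_lt_succ hN i).le (grid_lt_succ hN j).le

lemma sq_integral_le (f : ℝ → ℝ) (x : ℝ) (hx : 0 ≤ x)
    (hf : IntervalIntegrable f volume 0 x)
    (hf2 : IntervalIntegrable (fun t => f t ^ 2) volume 0 x) :
    (∫ s in (0:ℝ)..x, f s) ^ 2 ≤ x * ∫ s in (0:ℝ)..x, f s ^ 2 := by
  rcases eq_or_lt_of_le hx with h | h
  · rw [← h]
    simp
  · set I := ∫ s in (0:ℝ)..x, f s with hI
    set A := ∫ s in (0:ℝ)..x, f s ^ 2 with hA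
    have hnn : (0:ℝ) ≤ ∫ s in (0:ℝ)..x, (x * f s - I) ^ 2 :=
      intervalIntegral.integral_nonneg hx (fun s _ => sq_nonneg _)
    have hexp : ∫ s in (0:ℝ)..x, (x * f s - I) ^ 2
        = x^2 * A - 2 * x * I * I + I^2 * x := by
      have he : (fun s => (x * f s - I) ^ 2)
          = fun s => (x^2 * f s ^ 2 - (2 * x * I) * f s) + I^2 := by
        funext s; ring
      rw [he]
      rw [intervalIntegral.integral_add (((hf2.const_mul (x^2)).sub
        (hf.const_mul (2*x*I)))) (intervalIntegrable_const)]
      rw [intervalIntegral.integral_sub (hf2.const_mul (x^2)) (hf.const_mul (2*x*I))]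
      rw [intervalIntegral.integral_const_mul, intervalIntegral.integral_const_mul,
        intervalIntegral.integral_const]
      rw [← hI, ← hA]
      ring_nf
    rw [hexp] at hnn
    nlinarith

lemma ev2_mul (p q : MvPolynomial (Fin 2) ℝ) (x y : ℝ) :
    ev2 (p * q) x y = ev2 p x y * ev2 q x y := by
  rw [ev2, map_mul]; rfl

lemma ae_restrict_gridfree {N : ℕ} (hN : 0 < N) :
    ∀ᵐ x ∂(volume.restrict (Set.Icc (0:ℝ) 1)), gridfree N x := by
  rw [ae_restrict_iff' measurableSet_Icc]
  have hS : volume ((fun i : ℕ => (i:ℝ)/N) '' (Set.Iic N)) = 0 :=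
    ((Set.finite_Iic N).image _).measure_zero _
  rw [Filter.eventually_iff, mem_ae_iff]
  apply measure_mono_null _ hS
  intro x hx
  simp only [Set.mem_compl_iff, Set.mem_setOf_eq, Classical.not_imp] at hx
  obtain ⟨hmem, hng⟩ := hx
  have hNR : (0:ℝ) < N := by exact_mod_cast hN
  by_cases h0 : x = 0
  · exact ⟨0, Set.mem_Iic.mpr (Nat.zero_le N), by simp [h0]⟩
  by_cases h1 : x = 1
  · refine ⟨N, Set.mem_Iic.mpr le_rfl, ?_⟩
    show (N:ℝ)/N = x
    rw [grid_last hN, h1]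
  have hIoo : x ∈ Set.Ioo (0:ℝ) 1 :=
    ⟨lt_of_le_of_ne hmem.1 (fun h => h0 h.symm), lt_of_le_of_ne hmem.2 h1⟩
  rw [gridfree, not_and] at hng
  have := hng hIoo
  push_neg at this
  obtain ⟨i, hi⟩ := this
  refine ⟨i, Set.mem_Iic.mpr ?_, hi.symm⟩
  by_contra hgt
  push_neg at hgt
  have : (1:ℝ) < (i:ℝ)/N := by
    rw [lt_div_iff₀ hNR]
    have : (N:ℝ) + 1 ≤ (i:ℝ) := by exact_mod_cast hgt
    linarith
  rw [← hi] at this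
  linarith [hIoo.2]

lemma memVk_deg1 {k : ℕ} (hk : 1 ≤ k) {q1 q2 : MvPolynomial (Fin 2) ℝ}
    (h : memVk k q1 q2) : degreeOf 1 q1 ≤ k - 1 ∧ degreeOf 0 q2 ≤ k - 1 := by
  obtain ⟨p1, p2, a, b, c, d, hp1, hp2, he1, he2⟩ := h
  constructor
  · rw [he1]
    refine (degreeOf_add_le _ _ _).trans (max_le ((degreeOf_add_le _ _ _).trans (max_le ?_ ?_)) ?_)
    · exact (degreeOf_le_totalDegree p1 1).trans hp1
    · rw [C_mul_X_pow_eq_monomial, degreeOf_le_iff]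
      intro m hm
      have := support_monomial_subset hm
      rw [Finset.mem_singleton] at this
      subst this
      simp [Finsupp.single_apply]
    · rw [degreeOf_le_iff]
      intro m hm
      have h1 : (MvPolynomial.C b * X 0 * X (1:Fin 2) ^ (k-1) : MvPolynomial (Fin 2) ℝ)
          = monomial (Finsupp.single 0 1 + Finsupp.single 1 (k-1)) b := by
        rw [C_mul_X_eq_monomial, X_pow_eq_monomial, monomial_mul, mul_one]
      rw [h1] at hm
      have := support_monomial_subset hm
      rw [Finset.mem_singleton] at this
      subst this
      simp [Finsupp.add_apply, Finsupp.single_apply]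
  · rw [he2]
    refine (degreeOf_add_le _ _ _).trans (max_le ((degreeOf_add_le _ _ _).trans (max_le ?_ ?_)) ?_)
    · exact (degreeOf_le_totalDegree p2 0).trans hp2
    · rw [C_mul_X_pow_eq_monomial, degreeOf_le_iff]
      intro m hm
      have := support_monomial_subset hm
      rw [Finset.mem_singleton] at this
      subst this
      simp [Finsupp.single_apply]
    · rw [degreeOf_le_iff]
      intro m hm
      have h1 : (MvPolynomial.C d * X 0 ^ (k-1) * X (1:Fin 2) : MvPolynomial (Fin 2) ℝ)
          = monomial (Finsupp.single 0 (k-1) + Finsupp.single 1 1) d := by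
        rw [C_mul_X_pow_eq_monomial, ← pow_one (X 1 : MvPolynomial (Fin 2) ℝ),
          X_pow_eq_monomial, monomial_mul, mul_one]
      rw [h1] at hm
      have := support_monomial_subset hm
      rw [Finset.mem_singleton] at this
      subst this
      simp [Finsupp.add_apply, Finsupp.single_apply]

lemma memVk_memH1 {k : ℕ} (hk : 1 ≤ k) {q1 q2 : MvPolynomial (Fin 2) ℝ}
    (h : memVk k q1 q2) (G : MvPolynomial (Fin 2) ℝ) (hG : G.totalDegree ≤ k - 1) :
    memH1 k (antiX q1 + G) := by
  obtain ⟨p1, p2, a, b, c, d, hp1, hp2, he1, he2⟩ := h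
  rw [he1]
  exact memH1_construct k hk p1 a b hp1 G hG

lemma memVk_memH2 {k : ℕ} (hk : 1 ≤ k) {q1 q2 : MvPolynomial (Fin 2) ℝ}
    (h : memVk k q1 q2) (G : MvPolynomial (Fin 2) ℝ) (hG : G.totalDegree ≤ k - 1) :
    memH2 k (antiY q2 + G) := by
  obtain ⟨p1, p2, a, b, c, d, hp1, hp2, he1, he2⟩ := h
  rw [he2]
  exact memH2_construct k hk p2 c d hp2 G hG

lemma primitive_cell_formulaX {N : ℕ} (hN : 0 < N) (f : ℝ → ℝ)
    (R : ℕ → MvPolynomial (Fin 2) ℝ) (y : ℝ)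
    (hf : ∀ l, l < N → ∀ s ∈ Ix N l, f s = ev2 (R l) s y)
    {i : ℕ} (hi : i < N) {x : ℝ} (hx : x ∈ Ix N i) :
    ∫ s in (0:ℝ)..x, f s =
      (∑ l ∈ Finset.range i,
        (ev2 (antiX (R l)) (((l:ℝ)+1)/N) y - ev2 (antiX (R l)) ((l:ℝ)/N) y))
      + (ev2 (antiX (R i)) x y - ev2 (antiX (R i)) ((i:ℝ)/N) y) := by
  have hCW : CW N f := fun l hl => ⟨fun s => ev2 (R l) s y, continuous_ev2_x _ y, hf l hl⟩
  have hxI : x ∈ Set.Icc (0:ℝ) 1 := by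
    have := Ix_subset hN hi hx
    exact ⟨this.1.le, this.2.le⟩
  have hgridI : (i:ℝ)/N ∈ Set.Icc (0:ℝ) 1 := ⟨grid_nonneg, grid_le_one hN hi.le⟩
  have h1 : IntervalIntegrable f volume 0 ((i:ℝ)/N) :=
    hCW.intervalIntegrable_to_grid hN hi.le
  have h2 : IntervalIntegrable f volume ((i:ℝ)/N) x :=
    hCW.intervalIntegrable_sub hN hgridI hxI
  have hsplit : ∫ s in (0:ℝ)..x, f s
      = (∫ s in (0:ℝ)..((i:ℝ)/N), f s) + ∫ s in ((i:ℝ)/N)..x, f s :=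
    (intervalIntegral.integral_add_adjacent_intervals h1 h2).symm
  rw [hsplit]
  congr 1
  · have h := intervalIntegral.sum_integral_adjacent_intervals (μ := volume)
      (a := fun k : ℕ => (k:ℝ)/N) (n := i) (f := f) ?_
    · rw [grid_zero] at h
      rw [← h]
      refine Finset.sum_congr rfl fun l hl => ?_
      have hlN : l < N := lt_of_lt_of_le (Finset.mem_range.mp hl) hi.le
      have hc : ((l+1:ℕ):ℝ)/N = ((l:ℝ)+1)/N := by push_cast; ring
      rw [hc]
      exact integral_eq_of_eq_Ioo (continuous_ev2_x (R l) y)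
        (fun t => hasDerivAt_antiX (R l) y t) (hf l hlN)
        le_rfl (grid_lt_succ hN l).le le_rfl
    · intro l hl
      have hlN : l < N := lt_of_lt_of_le hl hi.le
      have h2' := hCW.intervalIntegrable_cell hN hlN
      have hc : ((l+1:ℕ):ℝ)/N = ((l:ℝ)+1)/N := by push_cast; ring
      simpa [hc] using h2'
  · exact integral_eq_of_eq_Ioo (continuous_ev2_x (R i) y)
      (fun t => hasDerivAt_antiX (R i) y t) (hf i hi)
      le_rfl hx.1.le hx.2.le

lemma primitive_cell_formulaY {N : ℕ} (hN : 0 < N) (f : ℝ → ℝ)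
    (R : ℕ → MvPolynomial (Fin 2) ℝ) (x : ℝ)
    (hf : ∀ l, l < N → ∀ t ∈ Ix N l, f t = ev2 (R l) x t)
    {j : ℕ} (hj : j < N) {y : ℝ} (hy : y ∈ Ix N j) :
    ∫ t in (0:ℝ)..y, f t =
      (∑ l ∈ Finset.range j,
        (ev2 (antiY (R l)) x (((l:ℝ)+1)/N) - ev2 (antiY (R l)) x ((l:ℝ)/N)))
      + (ev2 (antiY (R j)) x y - ev2 (antiY (R j)) x ((j:ℝ)/N)) := by
  have hCW : CW N f := fun l hl => ⟨fun t => ev2 (R l) x t, continuous_ev2_y _ x, hf l hl⟩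
  have hyI : y ∈ Set.Icc (0:ℝ) 1 := by
    have := Ix_subset hN hj hy
    exact ⟨this.1.le, this.2.le⟩
  have hgridI : (j:ℝ)/N ∈ Set.Icc (0:ℝ) 1 := ⟨grid_nonneg, grid_le_one hN hj.le⟩
  have h1 : IntervalIntegrable f volume 0 ((j:ℝ)/N) :=
    hCW.intervalIntegrable_to_grid hN hj.le
  have h2 : IntervalIntegrable f volume ((j:ℝ)/N) y :=
    hCW.intervalIntegrable_sub hN hgridI hyI
  have hsplit : ∫ t in (0:ℝ)..y, f t
      = (∫ t in (0:ℝ)..((j:ℝ)/N), f t) + ∫ t in ((j:ℝ)/N)..y, f t :=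
    (intervalIntegral.integral_add_adjacent_intervals h1 h2).symm
  rw [hsplit]
  congr 1
  · have h := intervalIntegral.sum_integral_adjacent_intervals (μ := volume)
      (a := fun k : ℕ => (k:ℝ)/N) (n := j) (f := f) ?_
    · rw [grid_zero] at h
      rw [← h]
      refine Finset.sum_congr rfl fun l hl => ?_
      have hlN : l < N := lt_of_lt_of_le (Finset.mem_range.mp hl) hj.le
      have hc : ((l+1:ℕ):ℝ)/N = ((l:ℝ)+1)/N := by push_cast; ring
      rw [hc]
      exact integral_eq_of_eq_Ioo (continuous_ev2_y (R l) x)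
        (fun t => hasDerivAt_antiY (R l) x t) (hf l hlN)
        le_rfl (grid_lt_succ hN l).le le_rfl
    · intro l hl
      have hlN : l < N := lt_of_lt_of_le hl hj.le
      have h2' := hCW.intervalIntegrable_cell hN hlN
      have hc : ((l+1:ℕ):ℝ)/N = ((l:ℝ)+1)/N := by push_cast; ring
      simpa [hc] using h2'
  · exact integral_eq_of_eq_Ioo (continuous_ev2_y (R j) x)
      (fun t => hasDerivAt_antiY (R j) x t) (hf j hj)
      le_rfl hy.1.le hy.2.le

end Aux

/-- Discrete inf-sup condition (Theorem 3.1): for every `v ∈ V_k(𝒯_h)` there is a nonzero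
`τ ∈ Σ_k(𝒯_h)` with `(div τ, v)_{L²} ≥ √(2/3) ‖v‖_{L²} ‖τ‖_{H(div)}`; equivalently
`sup_{0≠τ} (div τ, v)/‖τ‖_{H(div)} ≥ √(2/3) ‖v‖_{L²}`. -/
theorem discrete_inf_sup (k N : ℕ) (hk : 1 ≤ k) (hN : 0 < N)
    (v1 v2 : ℝ → ℝ → ℝ) (hv : meshVk k N v1 v2) :
    ∃ t11 t12 t22 : ℝ → ℝ → ℝ, meshSigma k N t11 t12 t22 ∧
      0 < hdivNormSq t11 t12 t22 ∧
      pairDiv t11 t12 t22 v1 v2 ≥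
        Real.sqrt (2 / 3) * Real.sqrt (vNormSq v1 v2) * Real.sqrt (hdivNormSq t11 t12 t22) := by
  classical
  have hNR : (0:ℝ) < N := by exact_mod_cast hN
  have hV0 : 0 ≤ vNormSq v1 v2 := ii_nonneg (fun x y => by positivity)
  rcases eq_or_lt_of_le hV0 with hV | hV
  · -- degenerate case `‖v‖ = 0` : take `τ = ((1,0),(0,0))`
    refine ⟨fun _ _ => 1, fun _ _ => 0, fun _ _ => 0, ⟨?_, ?_, ?_, ?_⟩, ?_, ?_⟩
    · intro i j hi hj
      refine ⟨MvPolynomial.C 1, 0, 0, ⟨MvPolynomial.C 1, 0, 0, ⟨?_, ?_⟩, by simp⟩,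
        ⟨0, 0, 0, ⟨by simp, by simp⟩, by simp⟩, ⟨0, 0, 0, by simp, by simp⟩, ?_⟩
      · simp
      · rw [MvPolynomial.coeff_C, if_neg]
        intro h
        have : k = 0 := by
          have := Finsupp.single_eq_zero.mp h.symm
          exact this
        omega
      · intro x y _ _
        refine ⟨?_, by simp [ev2], by simp [ev2]⟩
        simp [ev2]
    · intro y _ _; exact continuousOn_const
    · intro x _ _; exact continuousOn_const
    · exact continuousOn_const
    · have h1 : hdivNormSq (fun _ _ => (1:ℝ)) (fun _ _ => 0) (fun _ _ => 0) = 1 := by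
        rw [hdivNormSq]
        have e1 : ii (fun x y => ((fun _ _ => (1:ℝ)) x y) ^ 2
            + 2 * ((fun _ _ => (0:ℝ)) x y) ^ 2 + ((fun _ _ => (0:ℝ)) x y) ^ 2)
            = ii (fun _ _ => (1:ℝ)) := by
          congr 1
          funext x y
          norm_num
        have e2 : ii (fun x y => (div1 (fun _ _ => (1:ℝ)) (fun _ _ => 0) x y) ^ 2
            + (div2 (fun _ _ => (0:ℝ)) (fun _ _ => 0) x y) ^ 2) = ii (fun _ _ => (0:ℝ)) := by
          congr 1
          funext x y
          simp [div1, div2, Dx, Dy]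
        rw [e1, e2, ii, ii]
        simp
      rw [h1]; norm_num
    · have h2 : pairDiv (fun _ _ => (1:ℝ)) (fun _ _ => 0) (fun _ _ => 0) v1 v2 = 0 := by
        rw [pairDiv]
        have : (fun x y => div1 (fun _ _ => (1:ℝ)) (fun _ _ => 0) x y * v1 x y
            + div2 (fun _ _ => (0:ℝ)) (fun _ _ => 0) x y * v2 x y) = fun _ _ => (0:ℝ) := by
          funext x y
          simp [div1, div2, Dx, Dy]
        rw [this, ii]
        simp
      rw [h2, ← hV]
      simp
  · -- main case `‖v‖ > 0`
    have hv' : ∀ i j : ℕ, ∃ q1 q2 : MvPolynomial (Fin 2) ℝ,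
        i < N → j < N → memVk k q1 q2 ∧
          ∀ x y : ℝ, x ∈ Ix N i → y ∈ Ix N j →
            v1 x y = ev2 q1 x y ∧ v2 x y = ev2 q2 x y := by
      intro i j
      by_cases h : i < N ∧ j < N
      · obtain ⟨q1, q2, hm, hr⟩ := hv i j h.1 h.2
        exact ⟨q1, q2, fun _ _ => ⟨hm, hr⟩⟩
      · exact ⟨0, 0, fun hi hj => absurd ⟨hi, hj⟩ h⟩
    choose Q1 Q2 hQ using hv'
    have hCPv1 : CP N v1 Q1 := fun i hi j hj x hx y hy => ((hQ i j hi hj).2 x y hx hy).1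
    have hCPv2 : CP N v2 Q2 := fun i hi j hj x hx y hy => ((hQ i j hi hj).2 x y hx hy).2
    have hCPv1sq : CP N (fun x y => v1 x y ^ 2) (fun i j => Q1 i j * Q1 i j) := by
      intro i hi j hj x hx y hy
      rw [ev2_mul, ← hCPv1 i hi j hj x hx y hy]; ring
    have hCPv2sq : CP N (fun x y => v2 x y ^ 2) (fun i j => Q2 i j * Q2 i j) := by
      intro i hi j hj x hx y hy
      rw [ev2_mul, ← hCPv2 i hi j hj x hx y hy]; ring
    set t11 : ℝ → ℝ → ℝ := fun x y => ∫ s in (0:ℝ)..x, v1 s y with ht11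
    set t22 : ℝ → ℝ → ℝ := fun x y => ∫ t in (0:ℝ)..y, v2 x t with ht22
    set G1 : ℕ → ℕ → MvPolynomial (Fin 2) ℝ := fun i j =>
      (∑ l ∈ Finset.range i, (pEvX (antiX (Q1 l j)) (((l:ℝ)+1)/N)
        - pEvX (antiX (Q1 l j)) ((l:ℝ)/N))) - pEvX (antiX (Q1 i j)) ((i:ℝ)/N) with hG1
    set G2 : ℕ → ℕ → MvPolynomial (Fin 2) ℝ := fun i j =>
      (∑ l ∈ Finset.range j, (pEvY (antiY (Q2 i l)) (((l:ℝ)+1)/N)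
        - pEvY (antiY (Q2 i l)) ((l:ℝ)/N))) - pEvY (antiY (Q2 i j)) ((j:ℝ)/N) with hG2
    set T1 : ℕ → ℕ → MvPolynomial (Fin 2) ℝ := fun i j => antiX (Q1 i j) + G1 i j with hT1
    set T2 : ℕ → ℕ → MvPolynomial (Fin 2) ℝ := fun i j => antiY (Q2 i j) + G2 i j with hT2
    have hrep1 : CP N t11 T1 := by
      intro i hi j hj x hx y hy
      have hrow : ∀ l, l < N → ∀ s ∈ Ix N l, v1 s y = ev2 (Q1 l j) s y :=
        fun l hl s hs => hCPv1 l hl j hj s hs y hy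
      have h := primitive_cell_formulaX hN (fun s => v1 s y) (fun l => Q1 l j) y hrow hi hx
      rw [ht11]
      simp only []
      rw [h, hT1, hG1]
      simp only [ev2_add, ev2_sub, ev2_sum, ev2_pEvX]
      ring
    have hrep2 : CP N t22 T2 := by
      intro i hi j hj x hx y hy
      have hrow : ∀ l, l < N → ∀ t ∈ Ix N l, v2 x t = ev2 (Q2 i l) x t :=
        fun l hl t ht => hCPv2 i hi l hl x hx t ht
      have h := primitive_cell_formulaY hN (fun t => v2 x t) (fun l => Q2 i l) x hrow hj hy
      rw [ht22]
      simp only []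
      rw [h, hT2, hG2]
      simp only [ev2_add, ev2_sub, ev2_sum, ev2_pEvY]
      ring
    have hG1deg : ∀ i j, i < N → j < N → (G1 i j).totalDegree ≤ k - 1 := by
      intro i j hi hj
      rw [hG1]
      simp only []
      rw [sub_eq_add_neg]
      refine (totalDegree_add _ _).trans (max_le ?_ ?_)
      · refine (totalDegree_finset_sum _ _).trans ?_
        rw [Finset.sup_le_iff]
        intro l hl
        have hlN : l < N := lt_trans (Finset.mem_range.mp hl) hi
        rw [sub_eq_add_neg]
        refine (totalDegree_add _ _).trans (max_le ?_ ?_)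
        · exact (totalDegree_pEvX_le _ _).trans ((degreeOf_antiX_le _).trans
            (memVk_deg1 hk (hQ l j hlN hj).1).1)
        · rw [totalDegree_neg]
          exact (totalDegree_pEvX_le _ _).trans ((degreeOf_antiX_le _).trans
            (memVk_deg1 hk (hQ l j hlN hj).1).1)
      · rw [totalDegree_neg]
        exact (totalDegree_pEvX_le _ _).trans ((degreeOf_antiX_le _).trans
          (memVk_deg1 hk (hQ i j hi hj).1).1)
    have hG2deg : ∀ i j, i < N → j < N → (G2 i j).totalDegree ≤ k - 1 := by
      intro i j hi hj
      rw [hG2]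
      simp only []
      rw [sub_eq_add_neg]
      refine (totalDegree_add _ _).trans (max_le ?_ ?_)
      · refine (totalDegree_finset_sum _ _).trans ?_
        rw [Finset.sup_le_iff]
        intro l hl
        have hlN : l < N := lt_trans (Finset.mem_range.mp hl) hj
        rw [sub_eq_add_neg]
        refine (totalDegree_add _ _).trans (max_le ?_ ?_)
        · exact (totalDegree_pEvY_le _ _).trans ((degreeOf_antiY_le _).trans
            (memVk_deg1 hk (hQ i l hi hlN).1).2)
        · rw [totalDegree_neg]
          exact (totalDegree_pEvY_le _ _).trans ((degreeOf_antiY_le _).trans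
            (memVk_deg1 hk (hQ i l hi hlN).1).2)
      · rw [totalDegree_neg]
        exact (totalDegree_pEvY_le _ _).trans ((degreeOf_antiY_le _).trans
          (memVk_deg1 hk (hQ i j hi hj).1).2)
    have hDx11 : ∀ x, gridfree N x → ∀ y, gridfree N y → Dx t11 x y = v1 x y := by
      intro x hx y hy
      obtain ⟨i, hi, hxi⟩ := gridfree_mem_Ix hN hx
      obtain ⟨j, hj, hyj⟩ := gridfree_mem_Ix hN hy
      have hnb : Ix N i ∈ nhds x := by
        rw [Ix]
        exact isOpen_Ioo.mem_nhds hxi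
      have hloc : (fun t => t11 t y) =ᶠ[nhds x] (fun t => ev2 (T1 i j) t y) := by
        filter_upwards [hnb] with t ht
        exact hrep1 i hi j hj t ht y hyj
      have hconst : ∀ t : ℝ, ev2 (G1 i j) t y = ev2 (G1 i j) 0 y := by
        intro t
        rw [hG1]
        simp only [ev2_sub, ev2_sum, ev2_pEvX]
      have heq : (fun t => ev2 (T1 i j) t y)
          = fun t => ev2 (antiX (Q1 i j)) t y + ev2 (G1 i j) 0 y := by
        funext t
        rw [hT1]
        simp only [ev2_add]
        rw [hconst t]
      have hD : HasDerivAt (fun t => ev2 (T1 i j) t y) (ev2 (Q1 i j) x y) x := by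
        rw [heq]
        exact (hasDerivAt_antiX (Q1 i j) y x).add_const _
      rw [Dx, hloc.deriv_eq, hD.deriv]
      exact (hCPv1 i hi j hj x hxi y hyj).symm
    have hDy22 : ∀ x, gridfree N x → ∀ y, gridfree N y → Dy t22 x y = v2 x y := by
      intro x hx y hy
      obtain ⟨i, hi, hxi⟩ := gridfree_mem_Ix hN hx
      obtain ⟨j, hj, hyj⟩ := gridfree_mem_Ix hN hy
      have hnb : Ix N j ∈ nhds y := by
        rw [Ix]
        exact isOpen_Ioo.mem_nhds hyj
      have hloc : (fun t => t22 x t) =ᶠ[nhds y] (fun t => ev2 (T2 i j) x t) := by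
        filter_upwards [hnb] with t ht
        exact hrep2 i hi j hj x hxi t ht
      have hconst : ∀ t : ℝ, ev2 (G2 i j) x t = ev2 (G2 i j) x 0 := by
        intro t
        rw [hG2]
        simp only [ev2_sub, ev2_sum, ev2_pEvY]
      have heq : (fun t => ev2 (T2 i j) x t)
          = fun t => ev2 (antiY (Q2 i j)) x t + ev2 (G2 i j) x 0 := by
        funext t
        rw [hT2]
        simp only [ev2_add]
        rw [hconst t]
      have hD : HasDerivAt (fun t => ev2 (T2 i j) x t) (ev2 (Q2 i j) x y) y := by
        rw [heq]
        exact (hasDerivAt_antiY (Q2 i j) x y).add_const _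
      rw [Dy, hloc.deriv_eq, hD.deriv]
      exact (hCPv2 i hi j hj x hxi y hyj).symm
    have hdiv1 : ∀ x, gridfree N x → ∀ y, gridfree N y →
        div1 t11 (fun _ _ => 0) x y = v1 x y := by
      intro x hx y hy
      rw [div1, hDx11 x hx y hy, Dy]
      simp
    have hdiv2 : ∀ x, gridfree N x → ∀ y, gridfree N y →
        div2 (fun _ _ => 0) t22 x y = v2 x y := by
      intro x hx y hy
      rw [div2, hDy22 x hx y hy, Dx]
      simp
    have hms : meshSigma k N t11 (fun _ _ => 0) t22 := by
      refine ⟨?_, ?_, ?_, ?_⟩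
      · intro i j hi hj
        refine ⟨T1 i j, T2 i j, 0, ?_, ?_, ⟨0, 0, 0, by simp, by simp⟩, ?_⟩
        · rw [hT1]
          exact memVk_memH1 hk (hQ i j hi hj).1 _ (hG1deg i j hi hj)
        · rw [hT2]
          exact memVk_memH2 hk (hQ i j hi hj).1 _ (hG2deg i j hi hj)
        · intro x y hx hy
          exact ⟨hrep1 i hi j hj x hx y hy, hrep2 i hi j hj x hx y hy, by simp [ev2]⟩
      · intro y hy hyg
        obtain ⟨j, hj, hyj⟩ := gridfree_mem_Ix hN ⟨hy, hyg⟩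
        have hInt := (hCPv1.innerCW' hj hyj).integrableOn_Icc01 hN
        refine (intervalIntegral.continuousOn_primitive hInt).congr ?_
        intro x hx
        exact intervalIntegral.integral_of_le hx.1
      · intro x hx hxg
        obtain ⟨i, hi, hxi⟩ := gridfree_mem_Ix hN ⟨hx, hxg⟩
        have hInt := (hCPv2.innerCW hi hxi).integrableOn_Icc01 hN
        refine (intervalIntegral.continuousOn_primitive hInt).congr ?_
        intro y hy
        exact intervalIntegral.integral_of_le hy.1
      · exact continuousOn_const
    have hT1nn : 0 ≤ ii (fun x y => t11 x y ^ 2) := ii_nonneg (fun _ _ => sq_nonneg _)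
    have hT2nn : 0 ≤ ii (fun x y => t22 x y ^ 2) := ii_nonneg (fun _ _ => sq_nonneg _)
    have hCPt11sq : CP N (fun x y => t11 x y ^ 2) (fun i j => T1 i j * T1 i j) := by
      intro i hi j hj x hx y hy
      rw [ev2_mul, ← hrep1 i hi j hj x hx y hy]; ring
    have hCPt22sq : CP N (fun x y => t22 x y ^ 2) (fun i j => T2 i j * T2 i j) := by
      intro i hi j hj x hx y hy
      rw [ev2_mul, ← hrep2 i hi j hj x hx y hy]; ring
    have hVsplit : vNormSq v1 v2 = ii (fun x y => v1 x y ^ 2) + ii (fun x y => v2 x y ^ 2) := by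
      rw [vNormSq]
      exact ii_add' hN hCPv1sq hCPv2sq
    have hP : pairDiv t11 (fun _ _ => 0) t22 v1 v2 = vNormSq v1 v2 := by
      rw [pairDiv, vNormSq]
      apply ii_congr_gridfree hN
      intro x hx y hy
      rw [hdiv1 x hx y hy, hdiv2 x hx y hy]
      ring
    have hH : hdivNormSq t11 (fun _ _ => 0) t22
        = ii (fun x y => t11 x y ^ 2) + ii (fun x y => t22 x y ^ 2) + vNormSq v1 v2 := by
      rw [hdivNormSq]
      have e1 : ii (fun x y => t11 x y ^ 2 + 2 * ((fun _ _ => (0:ℝ)) x y) ^ 2 + t22 x y ^ 2)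
          = ii (fun x y => t11 x y ^ 2) + ii (fun x y => t22 x y ^ 2) := by
        have e0 : (fun x y => t11 x y ^ 2 + 2 * ((fun _ _ => (0:ℝ)) x y) ^ 2 + t22 x y ^ 2)
            = fun x y => t11 x y ^ 2 + t22 x y ^ 2 := by funext x y; norm_num
        rw [e0]
        exact ii_add' hN hCPt11sq hCPt22sq
      have e2 : ii (fun x y => (div1 t11 (fun _ _ => 0) x y) ^ 2
          + (div2 (fun _ _ => 0) t22 x y) ^ 2) = vNormSq v1 v2 := by
        rw [vNormSq]
        apply ii_congr_gridfree hN
        intro x hx y hy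
        rw [hdiv1 x hx y hy, hdiv2 x hx y hy]
      rw [e1, e2]
    have hJCW : CW N (fun y => ∫ s in (0:ℝ)..1, v1 s y ^ 2) := hCPv1sq.colCW hN
    have hW1 : ii (fun x y => v1 x y ^ 2)
        = ∫ y in (0:ℝ)..1, ∫ s in (0:ℝ)..1, v1 s y ^ 2 := ii_swap hN hCPv1sq
    have hptw1 : ∀ x, gridfree N x → ∀ y, gridfree N y →
        t11 x y ^ 2 ≤ x * ∫ s in (0:ℝ)..1, v1 s y ^ 2 := by
      intro x hx y hy
      obtain ⟨j, hj, hyj⟩ := gridfree_mem_Ix hN hy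
      have hCWrow : CW N (fun s => v1 s y) := hCPv1.innerCW' hj hyj
      have hCWrow2 : CW N (fun s => v1 s y ^ 2) := hCPv1sq.innerCW' hj hyj
      have hx01 : x ∈ Set.Icc (0:ℝ) 1 := ⟨hx.1.1.le, hx.1.2.le⟩
      have h0m : (0:ℝ) ∈ Set.Icc (0:ℝ) 1 := by norm_num
      have h1m : (1:ℝ) ∈ Set.Icc (0:ℝ) 1 := by norm_num
      have hIf := hCWrow.intervalIntegrable_sub hN h0m hx01
      have hIf2 := hCWrow2.intervalIntegrable_sub hN h0m hx01
      have hcs := sq_integral_le (fun s => v1 s y) x hx01.1 hIf hIf2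
      have hmono : (∫ s in (0:ℝ)..x, v1 s y ^ 2) ≤ ∫ s in (0:ℝ)..1, v1 s y ^ 2 := by
        have hIf2' := hCWrow2.intervalIntegrable_sub hN hx01 h1m
        have hsplit := intervalIntegral.integral_add_adjacent_intervals hIf2 hIf2'
        have hnn : 0 ≤ ∫ s in x..1, v1 s y ^ 2 :=
          intervalIntegral.integral_nonneg hx01.2 (fun s _ => sq_nonneg _)
        linarith
      calc t11 x y ^ 2 = (∫ s in (0:ℝ)..x, v1 s y) ^ 2 := by rw [ht11]
        _ ≤ x * ∫ s in (0:ℝ)..x, v1 s y ^ 2 := hcs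
        _ ≤ x * ∫ s in (0:ℝ)..1, v1 s y ^ 2 := mul_le_mul_of_nonneg_left hmono hx01.1
    have hbound1 : ii (fun x y => t11 x y ^ 2) ≤ (1/2) * ii (fun x y => v1 x y ^ 2) := by
      have houter : ii (fun x y => t11 x y ^ 2)
          ≤ ∫ x in (0:ℝ)..1, x * (∫ y in (0:ℝ)..1, ∫ s in (0:ℝ)..1, v1 s y ^ 2) := by
        rw [ii]
        apply intervalIntegral.integral_mono_ae_restrict zero_le_one
          ((hCPt11sq.rowCW hN).intervalIntegrable01 hN)
          ((continuous_id.mul continuous_const).intervalIntegrable 0 1)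
        filter_upwards [ae_restrict_gridfree hN] with x hx
        obtain ⟨i, hi, hxi⟩ := gridfree_mem_Ix hN hx
        have hIl := (hCPt11sq.innerCW hi hxi).intervalIntegrable01 hN
        have hIr := (hJCW.intervalIntegrable01 hN).const_mul x
        have hae : (fun y => t11 x y ^ 2) ≤ᵐ[MeasureTheory.volume.restrict (Set.Icc (0:ℝ) 1)]
            (fun y => x * ∫ s in (0:ℝ)..1, v1 s y ^ 2) := by
          filter_upwards [ae_restrict_gridfree hN] with y hy
          exact hptw1 x hx y hy
        have hmon := intervalIntegral.integral_mono_ae_restrict zero_le_one hIl hIr hae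
        rwa [intervalIntegral.integral_const_mul] at hmon
      have hcalc : (∫ x in (0:ℝ)..1, x * (∫ y in (0:ℝ)..1, ∫ s in (0:ℝ)..1, v1 s y ^ 2))
          = (1/2) * ∫ y in (0:ℝ)..1, ∫ s in (0:ℝ)..1, v1 s y ^ 2 := by
        rw [intervalIntegral.integral_mul_const, integral_id]
        ring
      rw [hW1]
      rw [hcalc] at houter
      exact houter
    have hKCW : CW N (fun x => ∫ t in (0:ℝ)..1, v2 x t ^ 2) := hCPv2sq.rowCW hN
    have hptw2 : ∀ x, gridfree N x → ∀ y, gridfree N y →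
        t22 x y ^ 2 ≤ y * ∫ t in (0:ℝ)..1, v2 x t ^ 2 := by
      intro x hx y hy
      obtain ⟨i, hi, hxi⟩ := gridfree_mem_Ix hN hx
      have hCWcol : CW N (fun t => v2 x t) := hCPv2.innerCW hi hxi
      have hCWcol2 : CW N (fun t => v2 x t ^ 2) := hCPv2sq.innerCW hi hxi
      have hy01 : y ∈ Set.Icc (0:ℝ) 1 := ⟨hy.1.1.le, hy.1.2.le⟩
      have h0m : (0:ℝ) ∈ Set.Icc (0:ℝ) 1 := by norm_num
      have h1m : (1:ℝ) ∈ Set.Icc (0:ℝ) 1 := by norm_num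
      have hIf := hCWcol.intervalIntegrable_sub hN h0m hy01
      have hIf2 := hCWcol2.intervalIntegrable_sub hN h0m hy01
      have hcs := sq_integral_le (fun t => v2 x t) y hy01.1 hIf hIf2
      have hmono : (∫ t in (0:ℝ)..y, v2 x t ^ 2) ≤ ∫ t in (0:ℝ)..1, v2 x t ^ 2 := by
        have hIf2' := hCWcol2.intervalIntegrable_sub hN hy01 h1m
        have hsplit := intervalIntegral.integral_add_adjacent_intervals hIf2 hIf2'
        have hnn : 0 ≤ ∫ t in y..1, v2 x t ^ 2 :=
          intervalIntegral.integral_nonneg hy01.2 (fun t _ => sq_nonneg _)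
        linarith
      calc t22 x y ^ 2 = (∫ t in (0:ℝ)..y, v2 x t) ^ 2 := by rw [ht22]
        _ ≤ y * ∫ t in (0:ℝ)..y, v2 x t ^ 2 := hcs
        _ ≤ y * ∫ t in (0:ℝ)..1, v2 x t ^ 2 := mul_le_mul_of_nonneg_left hmono hy01.1
    have hbound2 : ii (fun x y => t22 x y ^ 2) ≤ (1/2) * ii (fun x y => v2 x y ^ 2) := by
      have houter : ii (fun x y => t22 x y ^ 2)
          ≤ ∫ x in (0:ℝ)..1, (1/2) * (∫ t in (0:ℝ)..1, v2 x t ^ 2) := by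
        rw [ii]
        apply intervalIntegral.integral_mono_ae_restrict zero_le_one
          ((hCPt22sq.rowCW hN).intervalIntegrable01 hN)
          ((hKCW.intervalIntegrable01 hN).const_mul (1/2))
        filter_upwards [ae_restrict_gridfree hN] with x hx
        obtain ⟨i, hi, hxi⟩ := gridfree_mem_Ix hN hx
        have hIl := (hCPt22sq.innerCW hi hxi).intervalIntegrable01 hN
        have hIr : IntervalIntegrable (fun y => y * ∫ t in (0:ℝ)..1, v2 x t ^ 2)
            MeasureTheory.volume 0 1 := (continuous_id.mul continuous_const).intervalIntegrable 0 1
        have hae : (fun y => t22 x y ^ 2) ≤ᵐ[MeasureTheory.volume.restrict (Set.Icc (0:ℝ) 1)]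
            (fun y => y * ∫ t in (0:ℝ)..1, v2 x t ^ 2) := by
          filter_upwards [ae_restrict_gridfree hN] with y hy
          exact hptw2 x hx y hy
        have hmon := intervalIntegral.integral_mono_ae_restrict zero_le_one hIl hIr hae
        have hram : (∫ y in (0:ℝ)..1, y * ∫ t in (0:ℝ)..1, v2 x t ^ 2)
            = (1/2) * ∫ t in (0:ℝ)..1, v2 x t ^ 2 := by
          rw [intervalIntegral.integral_mul_const, integral_id]
          ring
        rwa [hram] at hmon
      have hfin : (∫ x in (0:ℝ)..1, (1/2) * (∫ t in (0:ℝ)..1, v2 x t ^ 2))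
          = (1/2) * ii (fun x y => v2 x y ^ 2) := by
        rw [intervalIntegral.integral_const_mul]
        rfl
      rwa [hfin] at houter
    have hHle : hdivNormSq t11 (fun _ _ => 0) t22 ≤ (3/2) * vNormSq v1 v2 := by
      rw [hH]
      have := hVsplit
      linarith
    have hH0 : 0 < hdivNormSq t11 (fun _ _ => 0) t22 := by
      rw [hH]
      linarith
    refine ⟨t11, fun _ _ => 0, t22, hms, hH0, ?_⟩
    rw [ge_iff_le, hP]
    have h1 : Real.sqrt (2/3) * Real.sqrt (vNormSq v1 v2)
        * Real.sqrt (hdivNormSq t11 (fun _ _ => 0) t22)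
        = Real.sqrt (2/3 * vNormSq v1 v2 * hdivNormSq t11 (fun _ _ => 0) t22) := by
      rw [← Real.sqrt_mul (by norm_num : (0:ℝ) ≤ 2/3),
        ← Real.sqrt_mul (mul_nonneg (by norm_num) hV.le)]
    rw [h1]
    have h2 : 2/3 * vNormSq v1 v2 * hdivNormSq t11 (fun _ _ => 0) t22
        ≤ (vNormSq v1 v2) ^ 2 := by nlinarith [hHle, hV]
    calc Real.sqrt (2/3 * vNormSq v1 v2 * hdivNormSq t11 (fun _ _ => 0) t22)
        ≤ Real.sqrt ((vNormSq v1 v2) ^ 2) := Real.sqrt_le_sqrt h2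
      _ = vNormSq v1 v2 := Real.sqrt_sq hV.le
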